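/- Let G be a finite simple graph with no isolated vertices, minimum degree δ and maximum degree Δ. Then 4δ·χ_{-2}(G) ≤ R(G) ≤ max{4Δ, (Δ+δ)^2/√(Δδ)}·χ_{-2}(G), where R(G) = Σ_{uv∈E(G)} 1/√(d_u d_v) is the Randić index and χ_{-2}(G) = Σ_{uv∈E(G)} (d_u+d_v)^{-2} is the general sum-connectivity index with exponent -2. -/

import Mathlib

open Finset

variable {V : Type*}

/-- Randić index: `Σ_{uv∈E} (d_u d_v)^{-1/2}`, written as half a double sum over vertices. -/
noncomputable def randicIndex [Fintype V] (G : SimpleGraph V) [DecidableRel G.Adj] : ℝ :=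
  (1 / 2) * ∑ u, ∑ v ∈ G.neighborFinset u,
    1 / Real.sqrt ((G.degree u : ℝ) * (G.degree v : ℝ))

/-- General sum-connectivity index with exponent -2: `Σ_{uv∈E} (d_u+d_v)^{-2}`. -/
noncomputable def sumConnectivityNeg2 [Fintype V] (G : SimpleGraph V) [DecidableRel G.Adj] : ℝ :=
  (1 / 2) * ∑ u, ∑ v ∈ G.neighborFinset u,
    1 / ((G.degree u : ℝ) + (G.degree v : ℝ))^2

private lemma aux_hval (c t : ℝ) (ht : 0 < t) :
    c^2 * (Real.sqrt t)⁻¹ + 2*c*Real.sqrt t + (Real.sqrt t)^3 = (c+t)^2 / Real.sqrt t := by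
  have hs : Real.sqrt t ^ 2 = t := Real.sq_sqrt ht.le
  have hs0 : 0 < Real.sqrt t := Real.sqrt_pos.mpr ht
  have h4 : Real.sqrt t ^ 4 = t^2 := by rw [show Real.sqrt t ^4 = (Real.sqrt t^2)^2 by ring, hs]
  rw [← hs]
  field_simp
  ring_nf
  rw [hs, h4]
  linear_combination 2 * c * hs

private lemma aux_one_var (c a b x : ℝ) (hc : 0 < c) (ha : 0 < a) (hax : a ≤ x) (hxb : x ≤ b) :
    (c+x)^2 / Real.sqrt x ≤ max ((c+a)^2 / Real.sqrt a) ((c+b)^2 / Real.sqrt b) := by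
  set h : ℝ → ℝ := fun s => c^2 * s⁻¹ + 2*c*s + s^3 with hh
  have hconv : ConvexOn ℝ (Set.Ioi 0) h := by
    have h1 : ConvexOn ℝ (Set.Ioi (0:ℝ)) (fun s : ℝ => c^2 * s⁻¹) := by
      have := (convexOn_zpow (𝕜 := ℝ) (-1)).smul (c := c^2) (by positivity)
      convert this using 2 with s
      case e'_12 => simp [zpow_neg]
      all_goals rfl
    have h2 : ConvexOn ℝ (Set.Ioi (0:ℝ)) (fun s : ℝ => 2*c*s) := by
      have := (convexOn_id (convex_Ioi (0:ℝ))).smul (c := 2*c) (by positivity)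
      convert this using 2 with s
      all_goals rfl
    have h3 : ConvexOn ℝ (Set.Ioi (0:ℝ)) (fun s : ℝ => s^3) :=
      (convexOn_pow 3).subset Set.Ioi_subset_Ici_self (convex_Ioi _)
    exact (h1.add h2).add h3
  have hx0 : 0 < x := ha.trans_le hax
  have hb0 : 0 < b := hx0.trans_le hxb
  have hsab : Real.sqrt a ≤ Real.sqrt b := Real.sqrt_le_sqrt (hax.trans hxb)
  have hmem : Real.sqrt x ∈ segment ℝ (Real.sqrt a) (Real.sqrt b) := by
    rw [segment_eq_Icc hsab]
    exact ⟨Real.sqrt_le_sqrt hax, Real.sqrt_le_sqrt hxb⟩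
  have := hconv.le_on_segment (x := Real.sqrt a) (y := Real.sqrt b)
    (Set.mem_Ioi.mpr (Real.sqrt_pos.mpr ha)) (Set.mem_Ioi.mpr (Real.sqrt_pos.mpr hb0)) hmem
  have e : ∀ t : ℝ, 0 < t → h (Real.sqrt t) = (c+t)^2 / Real.sqrt t :=
    fun t ht => aux_hval c t ht
  rw [max_def'] at this ⊢
  rwa [e x hx0, e a ha, e b hb0] at this

private lemma aux_two_var (d D x y : ℝ) (hd : 0 < d) (hx1 : d ≤ x) (hx2 : x ≤ D)
    (hy1 : d ≤ y) (hy2 : y ≤ D) :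
    (x+y)^2 / (Real.sqrt x * Real.sqrt y) ≤
      max (4*D) ((D+d)^2 / Real.sqrt (D*d)) := by
  have hD : 0 < D := hd.trans_le (hx1.trans hx2)
  have hy0 : 0 < y := hd.trans_le hy1
  have hx0 : 0 < x := hd.trans_le hx1
  have hsy : 0 < Real.sqrt y := Real.sqrt_pos.mpr hy0
  have hsd : 0 < Real.sqrt d := Real.sqrt_pos.mpr hd
  have hsD : 0 < Real.sqrt D := Real.sqrt_pos.mpr hD
  set M := max (4*D) ((D+d)^2 / Real.sqrt (D*d)) with hM
  have comp : ∀ c : ℝ, 0 < c →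
      (c+y)^2 / (Real.sqrt c * Real.sqrt y) ≤
        max ((c+d)^2 / (Real.sqrt c * Real.sqrt d))
            ((c+D)^2 / (Real.sqrt c * Real.sqrt D)) := by
    intro c hc
    have sc : 0 < Real.sqrt c := Real.sqrt_pos.mpr hc
    calc (c+y)^2 / (Real.sqrt c * Real.sqrt y)
        = ((c+y)^2 / Real.sqrt y) / Real.sqrt c := by
          rw [div_div, mul_comm]
      _ ≤ (max ((c+d)^2 / Real.sqrt d) ((c+D)^2 / Real.sqrt D)) / Real.sqrt c := by
          gcongr
          exact aux_one_var c d D y hc hd hy1 hy2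
      _ = max ((c+d)^2 / Real.sqrt d / Real.sqrt c) ((c+D)^2 / Real.sqrt D / Real.sqrt c) :=
          (max_div_div_right sc.le _ _).symm
      _ = max ((c+d)^2 / (Real.sqrt c * Real.sqrt d)) ((c+D)^2 / (Real.sqrt c * Real.sqrt D)) := by
          rw [div_div, div_div, mul_comm (Real.sqrt d), mul_comm (Real.sqrt D)]
  have hmain : (x+y)^2 / (Real.sqrt x * Real.sqrt y) ≤
      max ((d+y)^2 / (Real.sqrt d * Real.sqrt y)) ((D+y)^2 / (Real.sqrt D * Real.sqrt y)) := by
    calc (x+y)^2 / (Real.sqrt x * Real.sqrt y)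
        = ((y+x)^2 / Real.sqrt x) / Real.sqrt y := by
          rw [div_div, add_comm y x]
      _ ≤ (max ((y+d)^2 / Real.sqrt d) ((y+D)^2 / Real.sqrt D)) / Real.sqrt y := by
          gcongr
          exact aux_one_var y d D x hy0 hd hx1 hx2
      _ = max ((y+d)^2 / Real.sqrt d / Real.sqrt y) ((y+D)^2 / Real.sqrt D / Real.sqrt y) :=
          (max_div_div_right hsy.le _ _).symm
      _ = max ((d+y)^2 / (Real.sqrt d * Real.sqrt y)) ((D+y)^2 / (Real.sqrt D * Real.sqrt y)) := by
          rw [div_div, div_div, add_comm y d, add_comm y D]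
  have hdd : (d+d)^2 / (Real.sqrt d * Real.sqrt d) = 4*d := by
    rw [Real.mul_self_sqrt hd.le]
    field_simp
    ring
  have hDD : (D+D)^2 / (Real.sqrt D * Real.sqrt D) = 4*D := by
    rw [Real.mul_self_sqrt hD.le]
    field_simp
    ring
  have hdD : (d+D)^2 / (Real.sqrt d * Real.sqrt D) = (D+d)^2 / Real.sqrt (D*d) := by
    rw [Real.sqrt_mul hD.le, add_comm d D, mul_comm (Real.sqrt D)]
  have hDd : (D+d)^2 / (Real.sqrt D * Real.sqrt d) = (D+d)^2 / Real.sqrt (D*d) := by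
    rw [Real.sqrt_mul hD.le]
  have c1 : (d+y)^2 / (Real.sqrt d * Real.sqrt y) ≤ M := by
    refine (comp d hd).trans (max_le ?_ ?_)
    · rw [hdd]
      exact le_max_of_le_left (by linarith [hx1.trans hx2])
    · rw [hdD]
      exact le_max_right _ _
  have c2 : (D+y)^2 / (Real.sqrt D * Real.sqrt y) ≤ M := by
    refine (comp D hD).trans (max_le ?_ ?_)
    · rw [hDd]
      exact le_max_right _ _
    · rw [hDD]
      exact le_max_left _ _
  exact hmain.trans (max_le c1 c2)

private lemma aux_lower (d x y : ℝ) (hd : 0 < d) (hx : d ≤ x) (hy : d ≤ y) :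
    4*d*(1/(x+y)^2) ≤ 1/Real.sqrt (x*y) := by
  have hx0 : 0 < x := hd.trans_le hx
  have hy0 : 0 < y := hd.trans_le hy
  have hs : 0 < Real.sqrt (x*y) := Real.sqrt_pos.mpr (by positivity)
  rw [mul_one_div, div_le_div_iff₀ (by positivity) hs]
  have h1 : Real.sqrt (x*y) ≤ (x+y)/2 := by
    rw [show (x+y)/2 = Real.sqrt (((x+y)/2)^2) from (Real.sqrt_sq (by positivity)).symm]
    apply Real.sqrt_le_sqrt
    nlinarith [sq_nonneg (x-y)]
  nlinarith [mul_le_mul_of_nonneg_left h1 (by positivity : (0:ℝ) ≤ 4*d),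
    mul_nonneg (by linarith : (0:ℝ) ≤ x+y) (by linarith : (0:ℝ) ≤ x+y-2*d)]

private lemma aux_upper (d D x y : ℝ) (hd : 0 < d) (hx1 : d ≤ x) (hx2 : x ≤ D)
    (hy1 : d ≤ y) (hy2 : y ≤ D) :
    1/Real.sqrt (x*y) ≤ (max (4*D) ((D+d)^2 / Real.sqrt (D*d))) * (1/(x+y)^2) := by
  have hx0 : 0 < x := hd.trans_le hx1
  have hy0 : 0 < y := hd.trans_le hy1
  have h2 := (div_le_iff₀ (by positivity)).mp (aux_two_var d D x y hd hx1 hx2 hy1 hy2)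
  rw [Real.sqrt_mul hx0.le, mul_one_div, div_le_div_iff₀ (by positivity) (by positivity)]
  linarith

theorem randic_sumconn_bounds [Fintype V] (G : SimpleGraph V) [DecidableRel G.Adj]
    (hiso : ∀ v : V, 0 < G.degree v) :
    4 * (G.minDegree : ℝ) * sumConnectivityNeg2 G ≤ randicIndex G ∧
    randicIndex G ≤ max (4 * (G.maxDegree : ℝ))
      (((G.maxDegree : ℝ) + (G.minDegree : ℝ))^2 /
        Real.sqrt ((G.maxDegree : ℝ) * (G.minDegree : ℝ))) * sumConnectivityNeg2 G := by
  rcases isEmpty_or_nonempty V with h | h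
  · constructor <;> simp [randicIndex, sumConnectivityNeg2, Finset.univ_eq_empty]
  · have hd : 0 < (G.minDegree : ℝ) := by
      obtain ⟨v, hv⟩ := G.exists_minimal_degree_vertex
      have := hiso v
      rw [← hv] at this
      exact_mod_cast this
    have hdx : ∀ u : V, (G.minDegree : ℝ) ≤ (G.degree u : ℝ) := fun u => by
      exact_mod_cast G.minDegree_le_degree u
    have hxD : ∀ u : V, (G.degree u : ℝ) ≤ (G.maxDegree : ℝ) := fun u => by
      exact_mod_cast G.degree_le_maxDegree u
    constructor
    · unfold randicIndex sumConnectivityNeg2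
      calc 4 * (G.minDegree : ℝ) * ((1/2) * ∑ u, ∑ v ∈ G.neighborFinset u,
              1 / ((G.degree u : ℝ) + (G.degree v : ℝ))^2)
          = (1/2) * ∑ u, ∑ v ∈ G.neighborFinset u,
              4 * (G.minDegree : ℝ) * (1 / ((G.degree u : ℝ) + (G.degree v : ℝ))^2) := by
            simp only [← Finset.mul_sum]; ring
        _ ≤ (1/2) * ∑ u, ∑ v ∈ G.neighborFinset u,
              1 / Real.sqrt ((G.degree u : ℝ) * (G.degree v : ℝ)) := by
            gcongr with u _ v _
            exact aux_lower _ _ _ hd (hdx u) (hdx v)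
    · unfold randicIndex sumConnectivityNeg2
      calc (1/2) * ∑ u, ∑ v ∈ G.neighborFinset u,
              1 / Real.sqrt ((G.degree u : ℝ) * (G.degree v : ℝ))
          ≤ (1/2) * ∑ u, ∑ v ∈ G.neighborFinset u,
              (max (4 * (G.maxDegree : ℝ)) (((G.maxDegree : ℝ) + (G.minDegree : ℝ))^2 /
                Real.sqrt ((G.maxDegree : ℝ) * (G.minDegree : ℝ)))) *
              (1 / ((G.degree u : ℝ) + (G.degree v : ℝ))^2) := by
            gcongr with u _ v _
            exact aux_upper _ _ _ _ hd (hdx u) (hxD u) (hdx v) (hxD v)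
        _ = max (4 * (G.maxDegree : ℝ)) (((G.maxDegree : ℝ) + (G.minDegree : ℝ))^2 /
              Real.sqrt ((G.maxDegree : ℝ) * (G.minDegree : ℝ))) *
            ((1/2) * ∑ u, ∑ v ∈ G.neighborFinset u,
              1 / ((G.degree u : ℝ) + (G.degree v : ℝ))^2) := by
            simp only [← Finset.mul_sum]; ring
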